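/- Let q ≥ 2 be an integer and let C = C_{2q+1} denote the cycle of length 2q+1. Then every clique blowup G of C satisfies χ(G) ≤ ⌈((2q+1)/(2q))·ω(G)⌉. -/

import Mathlib

open SimpleGraph

/-- `G` is a clique blowup of `F` witnessed by the projection `f : β → α`: the fibers
`Q_v = f⁻¹(v)` are (possibly empty) cliques, `Q_u` is complete to `Q_v` when `uv ∈ E(F)`,
and `Q_u` is anticomplete to `Q_v` when `u ≠ v` and `uv ∉ E(F)`. -/
def IsCliqueBlowup {α β : Type} (F : SimpleGraph α) (G : SimpleGraph β) (f : β → α) : Prop :=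
  ∀ x y : β, G.Adj x y ↔ (x ≠ y ∧ (f x = f y ∨ F.Adj (f x) (f y)))

/-- Greedy distribution of a budget `B ≤ ∑ c` among slots with capacities `c`. -/
lemma exists_gaps {ι : Type*} [DecidableEq ι] (s : Finset ι) (c : ι → ℕ) :
    ∀ B : ℕ, B ≤ ∑ i ∈ s, c i →
      ∃ g : ι → ℕ, (∀ i, g i ≤ c i) ∧ ∑ i ∈ s, g i = B := by
  classical
  induction s using Finset.induction with
  | empty => intro B hB; simp at hB; exact ⟨fun _ => 0, fun _ => Nat.zero_le _, by simp [hB]⟩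
  | insert a s' ha ih =>
    intro B hB
    rw [Finset.sum_insert ha] at hB
    obtain ⟨g', hg'le, hg'sum⟩ := ih (B - min B (c a)) (by omega)
    refine ⟨Function.update g' a (min B (c a)), ?_, ?_⟩
    · intro i
      rcases eq_or_ne i a with rfl | hia
      · simp [Function.update_self]
      · simp [Function.update_of_ne hia]; exact hg'le i
    · rw [Finset.sum_insert ha, Function.update_self,
        Finset.sum_congr rfl (fun i hi => Function.update_of_ne (by rintro rfl; exact ha hi) _ g'),
        hg'sum]
      omega

/-- For `q ≥ 2`, every clique blowup `G` of the cycle `C_{2q+1}` satisfies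
`χ(G) ≤ ⌈((2q+1)/(2q))·ω(G)⌉`. -/
theorem chromatic_bound_blowup_odd_cycle (q : ℕ) (hq : 2 ≤ q)
    {β : Type} [Fintype β] (G : SimpleGraph β) (f : β → Fin (2 * q + 1))
    (hblow : IsCliqueBlowup (cycleGraph (2 * q + 1)) G f) :
    G.chromaticNumber ≤
      ((⌈((2 * q + 1 : ℚ)) / (2 * q) * (G.cliqueNum : ℚ)⌉₊ : ℕ) : ℕ∞) := by
  classical
  cases isEmpty_or_nonempty β with
  | inl hE =>
    have hcol : G.Colorable 0 := ⟨Coloring.mk (fun x => isEmptyElim x) (fun {x} => isEmptyElim x)⟩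
    exact le_trans hcol.chromaticNumber_le (by simp)
  | inr hNE =>
  set ω := G.cliqueNum with hω
  set k := ⌈((2 * q + 1 : ℚ)) / (2 * q) * (ω : ℚ)⌉₊ with hkdef
  -- fiber sizes
  set n : Fin (2 * q + 1) → ℕ :=
    fun v => (Finset.univ.filter fun x => f x = v).card with hn
  -- `1` in `Fin (2q+1)` has value `1`
  have hone : ((1 : Fin (2 * q + 1))).val = 1 := by
    rw [Fin.val_one', Nat.mod_eq_of_lt (by omega)]
  have hvne : ∀ v : Fin (2 * q + 1), v ≠ v + 1 := by
    intro v h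
    have : (v + 1) - v = (1 : Fin (2 * q + 1)) := add_sub_cancel_left v 1
    rw [← h, sub_self] at this
    have h2 : (0 : Fin (2 * q + 1)).val = (1 : Fin (2 * q + 1)).val := congrArg Fin.val this
    rw [Fin.val_zero, hone] at h2
    exact absurd h2 (by omega)
  have hadjsucc : ∀ v : Fin (2 * q + 1), (cycleGraph (2 * q + 1)).Adj v (v + 1) := by
    intro v
    rw [cycleGraph_adj']
    right
    rw [add_sub_cancel_left, hone]
  -- adjacent fiber sums are at most ω
  have hsum_le : ∀ v : Fin (2 * q + 1), n v + n (v + 1) ≤ ω := by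
    intro v
    set s : Finset β := (Finset.univ.filter fun x => f x = v) ∪
      (Finset.univ.filter fun x => f x = v + 1) with hs
    have hclique : G.IsClique s := by
      intro x hx y hy hne
      simp only [hs, Finset.coe_union, Set.mem_union, Finset.coe_filter,
        Set.mem_setOf_eq, Finset.mem_univ, true_and] at hx hy
      rw [hblow]
      refine ⟨hne, ?_⟩
      rcases eq_or_ne (f x) (f y) with h | h
      · exact Or.inl h
      · right
        rcases hx with hx | hx <;> rcases hy with hy | hy
        · exact absurd (hx.trans hy.symm) h
        · rw [hx, hy]; exact hadjsucc v
        · rw [hx, hy]; exact (hadjsucc v).symm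
        · exact absurd (hx.trans hy.symm) h
    have hdisj : Disjoint (Finset.univ.filter fun x => f x = v)
        (Finset.univ.filter fun x => f x = v + 1) := by
      rw [Finset.disjoint_filter]
      intro x _ h1 h2
      exact hvne v (h1.symm.trans h2)
    have hcard : s.card = n v + n (v + 1) := Finset.card_union_of_disjoint hdisj
    rw [← hcard]
    exact SimpleGraph.IsClique.card_le_cliqueNum (tc := hclique)
  -- ω ≤ k
  have hq2 : (0 : ℚ) < 2 * q := by positivity
  have hle_ceil : ((2 * q + 1 : ℚ)) / (2 * q) * (ω : ℚ) ≤ (k : ℚ) := Nat.le_ceil _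
  have hωk : ω ≤ k := by
    have h1 : (ω : ℚ) ≤ ((2 * q + 1 : ℚ)) / (2 * q) * (ω : ℚ) := by
      rw [div_mul_eq_mul_div, le_div_iff₀ hq2]
      nlinarith [Nat.cast_nonneg (α := ℚ) ω]
    have := h1.trans hle_ceil
    exact_mod_cast this
  -- total size N
  set N : ℕ := ∑ v : Fin (2 * q + 1), n v with hN
  have h2N : ∑ v : Fin (2 * q + 1), (n v + n (v + 1)) = 2 * N := by
    rw [Finset.sum_add_distrib]
    have : ∑ v : Fin (2 * q + 1), n (v + 1) = N := by
      rw [hN]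
      exact Fintype.sum_equiv (Equiv.addRight (1 : Fin (2 * q + 1))) _ _ (fun v => rfl)
    rw [this, ← hN]; ring
  have h2Nω : 2 * N ≤ (2 * q + 1) * ω := by
    rw [← h2N]
    calc ∑ v : Fin (2 * q + 1), (n v + n (v + 1)) ≤ ∑ _v : Fin (2 * q + 1), ω :=
          Finset.sum_le_sum (fun v _ => hsum_le v)
      _ = (2 * q + 1) * ω := by simp [mul_comm]
  -- N ≤ q * k
  have hNk : N ≤ q * k := by
    have h1 : ((2 * q + 1 : ℚ)) * (ω : ℚ) ≤ 2 * q * (k : ℚ) := by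
      rw [div_mul_eq_mul_div, div_le_iff₀ hq2] at hle_ceil
      linarith [hle_ceil]
    have h2 : ((2 * N : ℕ) : ℚ) ≤ ((2 * q + 1) * ω : ℕ) := by exact_mod_cast h2Nω
    have h3 : ((N : ℕ) : ℚ) ≤ ((q * k : ℕ) : ℚ) := by
      push_cast at h2 ⊢
      linarith
    exact_mod_cast h3
  -- k > 0
  have hk0 : 0 < k := by
    obtain ⟨x⟩ := hNE
    have h1 : (1 : ℕ) ≤ ω := by
      have hclique : G.IsClique ({x} : Finset β) := by
        simp [SimpleGraph.IsClique]
      have := SimpleGraph.IsClique.card_le_cliqueNum (tc := hclique)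
      simpa using this
    omega
  -- capacities and gaps
  have hcap : ∀ v : Fin (2 * q + 1), n v + n (v + 1) ≤ k := fun v => (hsum_le v).trans hωk
  have hbudget : q * k - N ≤ ∑ v : Fin (2 * q + 1), (k - (n v + n (v + 1))) := by
    have hsumcap : ∑ v : Fin (2 * q + 1), (k - (n v + n (v + 1))) + 2 * N
        = (2 * q + 1) * k := by
      rw [← h2N, ← Finset.sum_add_distrib]
      have : ∀ v : Fin (2 * q + 1), (k - (n v + n (v + 1))) + (n v + n (v + 1)) = k := by
        intro v; have := hcap v; omega
      rw [Finset.sum_congr rfl (fun v _ => this v)]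
      simp [mul_comm]
    have hexp : (2 * q + 1) * k = 2 * (q * k) + k := by ring
    omega
  obtain ⟨g, hgle, hgsum⟩ := exists_gaps Finset.univ (fun v => k - (n v + n (v + 1)))
    (q * k - N) hbudget
  -- interval starting points
  open Fin.NatCast in
  set a : ℕ → ℕ := fun t => ∑ j ∈ Finset.range t, (n (j : Fin (2 * q + 1)) + g (j : Fin (2 * q + 1))) with ha
  have harec : ∀ v : Fin (2 * q + 1), a (v.val + 1) = a v.val + (n v + g v) := by
    intro v
    simp only [ha]
    rw [Finset.sum_range_succ]
    congr 1 <;> rw [Fin.cast_val_eq_self]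
  open Fin.NatCast in
  have hatot : a (2 * q + 1) = q * k := by
    simp only [ha]
    rw [← Fin.sum_univ_eq_sum_range (fun j => n (j : Fin (2 * q + 1)) + g (j : Fin (2 * q + 1)))]
    have : ∀ v : Fin (2 * q + 1),
        n ((v.val : ℕ) : Fin (2 * q + 1)) + g ((v.val : ℕ) : Fin (2 * q + 1)) = n v + g v := by
      intro v; rw [Fin.cast_val_eq_self]
    rw [Finset.sum_congr rfl (fun v _ => this v), Finset.sum_add_distrib, ← hN, hgsum]
    omega
  -- key modular relation between consecutive starting points
  have hkey : ∀ v : Fin (2 * q + 1), a ((v + 1 : Fin (2 * q + 1)).val) % k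
      = (a v.val + (n v + g v)) % k := by
    intro v
    rw [← harec v]
    by_cases hvl : v = Fin.last (2 * q)
    · have h1 : (v + 1 : Fin (2 * q + 1)).val = 0 := by
        rw [Fin.val_add_one, if_pos hvl]
      have h2 : v.val + 1 = 2 * q + 1 := by rw [hvl]; simp [Fin.val_last]
      rw [h1, h2, hatot]
      simp [ha, Nat.mul_mod_left]
    · rw [Fin.val_add_one, if_neg hvl]
  -- ranks within fibers
  set idx : β → ℕ := fun x => ((Fintype.equivFin β) x).val with hidx
  have hidx_inj : Function.Injective idx :=
    Fin.val_injective.comp (Fintype.equivFin β).injective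
  set r : β → ℕ := fun x => (Finset.univ.filter fun z => f z = f x ∧ idx z < idx x).card with hr
  have hrlt : ∀ x : β, r x < n (f x) := by
    intro x
    apply Finset.card_lt_card
    rw [Finset.ssubset_iff_of_subset]
    · exact ⟨x, by simp, by simp⟩
    · intro z hz
      simp only [Finset.mem_filter, Finset.mem_univ, true_and] at hz ⊢
      exact hz.1
  have hrmono : ∀ x y : β, f x = f y → idx x < idx y → r x < r y := by
    intro x y hf hlt
    apply Finset.card_lt_card
    rw [Finset.ssubset_iff_of_subset]
    · refine ⟨x, ?_, ?_⟩
      · simp only [Finset.mem_filter, Finset.mem_univ, true_and]; exact ⟨hf, hlt⟩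
      · simp only [Finset.mem_filter, Finset.mem_univ, true_and, not_and]
        intro _; omega
    · intro z hz
      simp only [Finset.mem_filter, Finset.mem_univ, true_and] at hz ⊢
      exact ⟨hz.1.trans hf, hz.2.trans hlt⟩
  have hrne : ∀ x y : β, f x = f y → x ≠ y → r x ≠ r y := by
    intro x y hf hne
    rcases lt_trichotomy (idx x) (idx y) with h | h | h
    · exact Nat.ne_of_lt (hrmono x y hf h)
    · exact absurd (hidx_inj h) hne
    · exact (Nat.ne_of_lt (hrmono y x hf.symm h)).symm
  -- the coloring
  set col : β → Fin k := fun x => ⟨(a (f x).val + r x) % k, Nat.mod_lt _ hk0⟩ with hcol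
  -- claim: vertices in consecutive fibers get different colors
  have claim : ∀ x y : β, f y = f x + 1 → col x ≠ col y := by
    intro x y hfy heq
    rw [hcol, Fin.mk.injEq] at heq
    rw [hfy] at heq
    -- heq : (a (f x).val + r x) % k = (a ((f x + 1)).val + r y) % k
    have h1 : a (f x).val + r x ≡ a ((f x + 1 : Fin (2 * q + 1)).val) + r y [MOD k] := heq
    have h2 : a ((f x + 1 : Fin (2 * q + 1)).val) + r y
        ≡ (a (f x).val + (n (f x) + g (f x))) + r y [MOD k] :=
      Nat.ModEq.add_right _ (hkey (f x))
    have h3 : a (f x).val + r x ≡ a (f x).val + ((n (f x) + g (f x)) + r y) [MOD k] := by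
      have := h1.trans h2
      rwa [add_assoc] at this
    have h4 : r x ≡ (n (f x) + g (f x)) + r y [MOD k] := Nat.ModEq.add_left_cancel' _ h3
    have hrx : r x < n (f x) := hrlt x
    have hry : r y < n (f x + 1) := by have := hrlt y; rwa [hfy] at this
    have hgv : g (f x) ≤ k - (n (f x) + n (f x + 1)) := hgle (f x)
    have hcapv : n (f x) + n (f x + 1) ≤ k := hcap (f x)
    have hbig : (n (f x) + g (f x)) + r y < k := by omega
    have hsmall : r x < k := by omega
    have := h4
    rw [Nat.ModEq, Nat.mod_eq_of_lt hsmall, Nat.mod_eq_of_lt hbig] at this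
    omega
  have hvalid : ∀ {x y : β}, G.Adj x y → col x ≠ col y := by
    intro x y hadj
    rw [hblow] at hadj
    obtain ⟨hne, hcase⟩ := hadj
    rcases hcase with hf | hadj'
    · -- same fiber
      intro heq
      rw [hcol, Fin.mk.injEq] at heq
      rw [hf] at heq
      have h1 : r x ≡ r y [MOD k] := Nat.ModEq.add_left_cancel' _ heq
      have hrx : r x < n (f y) := by have := hrlt x; rwa [hf] at this
      have hry : r y < n (f y) := hrlt y
      have hnk : n (f y) ≤ k := le_trans (Nat.le_add_right _ _) (hcap (f y))
      rw [Nat.ModEq, Nat.mod_eq_of_lt (by omega), Nat.mod_eq_of_lt (by omega)] at h1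
      exact hrne x y hf hne h1
    · -- adjacent fibers
      rw [cycleGraph_adj'] at hadj'
      rcases hadj' with h | h
      · -- (f x - f y).val = 1, so f x = f y + 1
        have hfx : f x = f y + 1 := by
          have : f x - f y = 1 := by
            apply Fin.ext; rw [h, hone]
          rw [sub_eq_iff_eq_add] at this
          exact this.trans (add_comm 1 (f y))
        exact (claim y x hfx).symm
      · have hfy : f y = f x + 1 := by
          have : f y - f x = 1 := by
            apply Fin.ext; rw [h, hone]
          rw [sub_eq_iff_eq_add] at this
          exact this.trans (add_comm 1 (f x))
        exact claim x y hfy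
  have hcolorable : G.Colorable k := ⟨Coloring.mk col hvalid⟩
  exact hcolorable.chromaticNumber_le
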